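/- There exists a constant C > 0, independent of τ̃, such that for every τ̃ > 0 and every eigenpair (λ, φ) of the one-dimensional NLEP with Re λ ≥ 0, one has |λ| ≤ C. -/

import Mathlib

open MeasureTheory Filter Real Set
open scoped ENNReal

noncomputable section

/-- The one-dimensional ground state `w(y) = √2 · sech y`, the unique even positive
solution of `w'' − w + w³ = 0` on `ℝ` tending to `0` at infinity. -/
def w1d (y : ℝ) : ℝ := Real.sqrt 2 / Real.cosh y


lemma w1d_pos (y : ℝ) : 0 < w1d y :=
  div_pos (Real.sqrt_pos.2 two_pos) (Real.cosh_pos y)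

lemma w1d_le (y : ℝ) : w1d y ≤ Real.sqrt 2 := by
  rw [w1d, div_le_iff₀ (Real.cosh_pos y)]
  nlinarith [Real.one_le_cosh y, Real.sqrt_nonneg 2]

lemma w1d_continuous : Continuous w1d :=
  continuous_const.div Real.continuous_cosh (fun y => (Real.cosh_pos y).ne')

lemma w1d_le_exp (y : ℝ) : w1d y ≤ 2 * Real.sqrt 2 * Real.exp (-|y|) := by
  have hc : Real.exp (|y|) / 2 ≤ Real.cosh y := by
    rw [Real.cosh_eq]
    rcases abs_cases y with ⟨h, _⟩ | ⟨h, _⟩ <;> rw [h] <;>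
      nlinarith [Real.exp_pos y, Real.exp_pos (-y)]
  have hep : (0:ℝ) < Real.exp |y| := Real.exp_pos _
  rw [w1d, div_le_iff₀ (Real.cosh_pos y)]
  have : Real.sqrt 2 = (2 * Real.sqrt 2 * Real.exp (-|y|)) * (Real.exp |y| / 2) := by
    rw [Real.exp_neg]; field_simp
  nth_rewrite 1 [this]
  apply mul_le_mul_of_nonneg_left hc
  positivity

lemma integrable_exp_neg_abs : Integrable (fun x : ℝ => Real.exp (-|x|)) volume := by
  have h1 : IntegrableOn (fun x : ℝ => Real.exp (-|x|)) (Ici 0) := by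
    rw [integrableOn_Ici_iff_integrableOn_Ioi]
    apply ((exp_neg_integrableOn_Ioi 0 one_pos).congr_fun ?_ measurableSet_Ioi)
    intro x hx; simp [abs_of_pos (show (0:ℝ) < x from hx)]
  rw [← integrableOn_univ, ← @Iio_union_Ici _ _ (0 : ℝ), integrableOn_union]
  refine ⟨?_, h1⟩
  rw [← (Measure.measurePreserving_neg (volume : Measure ℝ)).integrableOn_comp_preimage
      (Homeomorph.neg ℝ).measurableEmbedding]
  simp only [Function.comp_def, abs_neg, neg_preimage, neg_Iio, neg_zero]
  exact h1.mono_set Ioi_subset_Ici_self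

lemma integrable_w1d_pow (k : ℕ) (hk : 1 ≤ k) : Integrable (fun y => w1d y ^ k) volume := by
  apply Integrable.mono' (integrable_exp_neg_abs.const_mul (Real.sqrt 2 ^ (k-1) * (2 * Real.sqrt 2)))
  · exact (w1d_continuous.pow k).aestronglyMeasurable
  · apply Eventually.of_forall; intro y
    rw [Real.norm_eq_abs, abs_of_nonneg (pow_nonneg (w1d_pos y).le k)]
    calc w1d y ^ k = w1d y ^ (k - 1) * w1d y := by
          rw [← pow_succ, Nat.sub_add_cancel hk]
      _ ≤ Real.sqrt 2 ^ (k-1) * (2 * Real.sqrt 2 * Real.exp (-|y|)) := by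
          apply mul_le_mul (pow_le_pow_left₀ (w1d_pos y).le (w1d_le y) _) (w1d_le_exp y)
            (w1d_pos y).le (by positivity)
      _ = Real.sqrt 2 ^ (k-1) * (2 * Real.sqrt 2) * Real.exp (-|y|) := by ring

lemma memLp_w1d_pow (k : ℕ) (hk : 1 ≤ k) :
    MemLp (fun y => (w1d y : ℂ) ^ k) 2 volume := by
  rw [memLp_two_iff_integrable_sq_norm]
  · apply (integrable_w1d_pow (2*k) (by omega)).congr
    apply Eventually.of_forall; intro y
    simp only [norm_pow, Complex.norm_real, Real.norm_eq_abs, abs_of_nonneg (w1d_pos y).le,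
      ← pow_mul, mul_comm 2 k]
  · exact (Complex.continuous_ofReal.comp w1d_continuous).pow k |>.aestronglyMeasurable

lemma integral_w1d_pow_pos (k : ℕ) (hk : 1 ≤ k) : 0 < ∫ y, w1d y ^ k := by
  rw [integral_pos_iff_support_of_nonneg (fun y => pow_nonneg (w1d_pos y).le k)
    (integrable_w1d_pow k hk)]
  have : Function.support (fun y => w1d y ^ k) = univ := by
    ext y; simp [Function.mem_support, (pow_pos (w1d_pos y) k).ne']
  rw [this]
  simp
lemma memLp_conj {f : ℝ → ℂ} (hf : MemLp f 2 volume) :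
    MemLp (fun x => (starRingEnd ℂ) (f x)) 2 volume := by
  refine MemLp.of_le hf (Complex.continuous_conj.comp_aestronglyMeasurable hf.1) ?_
  filter_upwards with x
  simp

lemma integrable_mul_L2 {f g : ℝ → ℂ} (hf : MemLp f 2 volume) (hg : MemLp g 2 volume) :
    Integrable (fun x => f x * g x) volume := by
  have h : (1 : ℝ≥0∞) / 1 = 1/2 + 1/2 := by rw [ENNReal.add_halves]; simp
  have := (hg.smul hf : MemLp (f • g) 1 volume)
  rw [memLp_one_iff_integrable] at this
  exact this

lemma integrable_mul_L2' {f g : ℝ → ℝ} (hf : MemLp f 2 volume) (hg : MemLp g 2 volume) :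
    Integrable (fun x => f x * g x) volume := by
  have h : (1 : ℝ≥0∞) / 1 = 1/2 + 1/2 := by rw [ENNReal.add_halves]; simp
  have := (hg.smul hf : MemLp (f • g) 1 volume)
  rw [memLp_one_iff_integrable] at this
  exact this

lemma tendsto_zero_atTop_of_integrable_deriv {u u' : ℝ → ℝ}
    (hd : ∀ x, HasDerivAt u (u' x) x) (hui : Integrable u volume)
    (hu'i : Integrable u' volume) (hnn : ∀ x, 0 ≤ u x) :
    Tendsto u atTop (nhds 0) := by
  have key : ∀ x : ℝ, u x = u 0 + ∫ t in (0:ℝ)..x, u' t := by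
    intro x
    rw [intervalIntegral.integral_eq_sub_of_hasDerivAt (fun t _ => hd t)
      hu'i.intervalIntegrable]
    ring
  have hlim : Tendsto u atTop (nhds (u 0 + ∫ t in Ioi (0:ℝ), u' t)) := by
    have h2 := intervalIntegral_tendsto_integral_Ioi 0 hu'i.integrableOn tendsto_id
    have := h2.const_add (u 0)
    apply this.congr
    intro x; exact (key x).symm
  set L := u 0 + ∫ t in Ioi (0:ℝ), u' t with hL
  have hL0 : 0 ≤ L := ge_of_tendsto hlim (Eventually.of_forall hnn)
  rcases eq_or_lt_of_le hL0 with h0 | h0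
  · rwa [← h0] at hlim
  · exfalso
    have hev : ∀ᶠ x in atTop, L/2 ≤ u x :=
      hlim.eventually (eventually_ge_nhds (by linarith))
    obtain ⟨M, hM⟩ := hev.exists_forall_of_atTop
    have hconst : IntegrableOn (fun _ : ℝ => L/2) (Ioi M) volume := by
      apply Integrable.mono' (hui.integrableOn (s := Ioi M))
        aestronglyMeasurable_const
      filter_upwards [ae_restrict_mem measurableSet_Ioi] with x hx
      rw [Real.norm_eq_abs, abs_of_nonneg (by linarith)]
      exact hM x hx.le
    rw [integrableOn_const_iff] at hconst
    rcases hconst with h | h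
    · simp at h; linarith
    · simp [Real.volume_Ioi] at h

lemma tendsto_zero_atBot_of_integrable_deriv {u u' : ℝ → ℝ}
    (hd : ∀ x, HasDerivAt u (u' x) x) (hui : Integrable u volume)
    (hu'i : Integrable u' volume) (hnn : ∀ x, 0 ≤ u x) :
    Tendsto u atBot (nhds 0) := by
  have hd' : ∀ x, HasDerivAt (fun y => u (-y)) (-u' (-x)) x := by
    intro x
    have := (hd (-x)).comp x (hasDerivAt_neg x)
    simpa [Function.comp_def] using this
  have := tendsto_zero_atTop_of_integrable_deriv hd' hui.comp_neg
    hu'i.comp_neg.neg (fun x => hnn _)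
  have h2 := this.comp tendsto_neg_atBot_atTop
  have h3 : ((fun y => u (-y)) ∘ Neg.neg) = u := by funext x; simp
  rwa [h3] at h2

lemma norm_sq_tendsto_zero {f g : ℝ → ℂ} (hd : ∀ x, HasDerivAt f (g x) x)
    (hcg : Continuous g) (hf : MemLp f 2 volume) (hg : MemLp g 2 volume) :
    Tendsto (fun x => ‖f x‖^2) atTop (nhds 0) ∧
      Tendsto (fun x => ‖f x‖^2) atBot (nhds 0) := by
  have hcf : Continuous f := by
    rw [continuous_iff_continuousAt]; exact fun x => (hd x).continuousAt
  have hu : ∀ x, HasDerivAt (fun y => ‖f y‖^2)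
      (2 * (inner ℝ (f x) (g x))) x := by
    intro x
    have h1 : HasDerivAt (fun y => (inner ℝ (f y) (f y)))
        ((inner ℝ (f x) (g x)) + inner ℝ (g x) (f x)) x :=
      (hd x).inner ℝ (hd x)
    have h2 : (fun y => (inner ℝ (f y) (f y))) = fun y => ‖f y‖^2 := by
      funext y; exact real_inner_self_eq_norm_sq (f y)
    rw [h2] at h1
    rw [real_inner_comm (g x) (f x), ← two_mul] at h1
    rwa [real_inner_comm (f x) (g x)] at h1

  have hui : Integrable (fun x => ‖f x‖^2) volume := by
    simpa using hf.norm.integrable_sq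
  have hu'i : Integrable (fun x => 2 * (inner ℝ (f x) (g x))) volume := by
    apply Integrable.mono' (((integrable_mul_L2' hf.norm hg.norm).const_mul 2))
    · exact (continuous_const.mul (hcf.inner hcg)).aestronglyMeasurable
    · filter_upwards with x
      rw [Real.norm_eq_abs, abs_mul, abs_two]
      have := abs_real_inner_le_norm (f x) (g x)
      nlinarith [abs_nonneg (inner ℝ (f x) (g x)), norm_nonneg (g x), norm_nonneg (f x)]
  have hnn : ∀ x, 0 ≤ ‖f x‖^2 := fun x => sq_nonneg _
  exact ⟨tendsto_zero_atTop_of_integrable_deriv hu hui hu'i hnn,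
    tendsto_zero_atBot_of_integrable_deriv hu hui hu'i hnn⟩

lemma ibp_L2 {f g h : ℝ → ℂ} (hdf : ∀ x, HasDerivAt f (g x) x)
    (hdg : ∀ x, HasDerivAt g (h x) x) (hch : Continuous h)
    (hf : MemLp f 2 volume) (hg : MemLp g 2 volume) (hh : MemLp h 2 volume) :
    ∫ x, h x * (starRingEnd ℂ) (f x) = - ∫ x, g x * (starRingEnd ℂ) (g x) := by
  have hcf : Continuous f := by
    rw [continuous_iff_continuousAt]; exact fun x => (hdf x).continuousAt
  have hcg : Continuous g := by
    rw [continuous_iff_continuousAt]; exact fun x => (hdg x).continuousAt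
  have int1 : Integrable (fun x => h x * (starRingEnd ℂ) (f x)) volume :=
    integrable_mul_L2 hh (memLp_conj hf)
  have int2 : Integrable (fun x => g x * (starRingEnd ℂ) (g x)) volume :=
    integrable_mul_L2 hg (memLp_conj hg)
  set F : ℝ → ℂ := fun x => g x * (starRingEnd ℂ) (f x) with hFdef
  have hF : ∀ x, HasDerivAt F
      (h x * (starRingEnd ℂ) (f x) + g x * (starRingEnd ℂ) (g x)) x := by
    intro x
    have hstar : HasDerivAt (fun y => (starRingEnd ℂ) (f y)) ((starRingEnd ℂ) (g x)) x :=
      (hdf x).star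
    exact (hdg x).mul hstar
  have key : ∀ a : ℝ, (∫ x in (-a)..a,
      (h x * (starRingEnd ℂ) (f x) + g x * (starRingEnd ℂ) (g x))) = F a - F (-a) := by
    intro a
    apply intervalIntegral.integral_eq_sub_of_hasDerivAt (fun t _ => hF t)
    apply Continuous.intervalIntegrable
    exact (hch.mul (Complex.continuous_conj.comp hcf)).add
      (hcg.mul (Complex.continuous_conj.comp hcg))
  have T1 : Tendsto (fun a : ℝ => (∫ x in (-a)..a,
      (h x * (starRingEnd ℂ) (f x) + g x * (starRingEnd ℂ) (g x)))) atTop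
      (nhds (∫ x, (h x * (starRingEnd ℂ) (f x) + g x * (starRingEnd ℂ) (g x)))) :=
    intervalIntegral_tendsto_integral (int1.add int2) tendsto_neg_atTop_atBot tendsto_id
  obtain ⟨hf_top, hf_bot⟩ := norm_sq_tendsto_zero hdf hcg hf hg
  obtain ⟨hg_top, hg_bot⟩ := norm_sq_tendsto_zero hdg hch hg hh
  have Fbound : ∀ x, ‖F x‖ ≤ (‖g x‖^2 + ‖f x‖^2)/2 := by
    intro x
    rw [hFdef]
    simp only [norm_mul, Complex.norm_conj]
    nlinarith [norm_nonneg (g x), norm_nonneg (f x), sq_nonneg (‖g x‖ - ‖f x‖)]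
  have FtendTop : Tendsto F atTop (nhds 0) := by
    apply squeeze_zero_norm Fbound
    have := (hg_top.add hf_top).div_const 2
    simpa using this
  have FtendBot : Tendsto F atBot (nhds 0) := by
    apply squeeze_zero_norm Fbound
    have := (hg_bot.add hf_bot).div_const 2
    simpa using this
  have T2 : Tendsto (fun a : ℝ => F a - F (-a)) atTop (nhds (0 - 0)) :=
    FtendTop.sub (FtendBot.comp tendsto_neg_atTop_atBot)
  have T1' : Tendsto (fun a : ℝ => F a - F (-a)) atTop
      (nhds (∫ x, (h x * (starRingEnd ℂ) (f x) + g x * (starRingEnd ℂ) (g x)))) := by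
    apply T1.congr; intro a; exact key a
  have heq := tendsto_nhds_unique T1' T2
  rw [integral_add int1 int2] at heq
  simp only [sub_zero] at heq
  linear_combination heq
def IsNLEP1Eigenpair (τ : ℝ) (lam : ℂ) (φ : ℝ → ℂ) : Prop :=
  ContDiff ℝ 2 φ ∧ (∃ x, φ x ≠ 0) ∧
  MemLp φ 2 volume ∧ MemLp (deriv φ) 2 volume ∧
  1 + (τ : ℂ) * lam ≠ 0 ∧
  ∀ x : ℝ, deriv (deriv φ) x - φ x + 3 * (w1d x : ℂ) ^ 2 * φ x
      - (3 / (1 + (τ : ℂ) * lam)) *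
          ((∫ y, (w1d y : ℂ) ^ 2 * φ y) / (∫ y, (w1d y : ℂ) ^ 3)) * (w1d x : ℂ) ^ 3
      - (2 * (τ : ℂ) * lam / (1 + (τ : ℂ) * lam)) *
          ((∫ y, (w1d y : ℂ) * φ y) / (∫ y, (w1d y : ℂ) ^ 2)) * (w1d x : ℂ) ^ 3
      = lam * φ x

lemma w1d_sq_le (y : ℝ) : w1d y ^ 2 ≤ 2 := by
  have h := w1d_le y
  have h2 : Real.sqrt 2 ^ 2 = 2 := Real.sq_sqrt (by norm_num)
  nlinarith [(w1d_pos y).le]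

lemma norm_w1d_pow (k : ℕ) (y : ℝ) : ‖((w1d y : ℂ)) ^ k‖ = w1d y ^ k := by
  rw [norm_pow, Complex.norm_real, Real.norm_eq_abs, abs_of_nonneg (w1d_pos y).le]

lemma abs_integral_w_mul_le (k : ℕ) (hk : 1 ≤ k) {ρ : ℝ → ℂ} (hρ : MemLp ρ 2 volume) :
    ‖(∫ y, (w1d y : ℂ) ^ k * ρ y)‖
      ≤ ((∫ y, w1d y ^ (2 * k)) + ∫ y, ‖ρ y‖ ^ 2) / 2 := by
  have hρsq : Integrable (fun y => ‖ρ y‖ ^ 2) volume := by simpa using hρ.norm.integrable_sq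
  have iw : Integrable (fun y => w1d y ^ (2 * k)) volume :=
    integrable_w1d_pow (2 * k) (by omega)
  have iint : Integrable (fun y => (w1d y : ℂ) ^ k * ρ y) volume :=
    integrable_mul_L2 (memLp_w1d_pow k hk) hρ
  have h1 : ‖(∫ y, (w1d y : ℂ) ^ k * ρ y)‖
      ≤ ∫ y, ‖(w1d y : ℂ) ^ k * ρ y‖ := by
    simpa using
      norm_integral_le_integral_norm (fun y => (w1d y : ℂ) ^ k * ρ y)
  refine h1.trans ?_
  rw [← integral_add iw hρsq, ← integral_div]
  apply integral_mono iint.norm ((iw.add hρsq).div_const 2)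
  intro y
  show ‖(w1d y : ℂ) ^ k * ρ y‖ ≤ (w1d y ^ (2 * k) + ‖ρ y‖ ^ 2) / 2
  rw [norm_mul, norm_w1d_pow]
  have hsq : w1d y ^ (2 * k) = (w1d y ^ k) ^ 2 := by rw [mul_comm, pow_mul]
  nlinarith [sq_nonneg (w1d y ^ k - ‖ρ y‖), norm_nonneg (ρ y),
    pow_nonneg (w1d_pos y).le k]

/-- The main a priori bound, for a normalized eigenfunction. -/
lemma nlep_core (τ : ℝ) (hτ : 0 < τ) (lam : ℂ) (φ : ℝ → ℂ)
    (hep : IsNLEP1Eigenpair τ lam φ) (hre : 0 ≤ lam.re)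
    (hnorm : (∫ x, ‖φ x‖ ^ 2) = 1) :
    ‖lam‖ ≤ 6 +
      (3 * (((∫ y, w1d y ^ 4) + 1) / 2) / (∫ y, w1d y ^ 3)
        + 4 * (((∫ y, w1d y ^ 2) + 1) / 2) / (∫ y, w1d y ^ 2))
      * ((∫ y, w1d y ^ 6) + 1) := by
  obtain ⟨hC2, -, hφ2, hg2, hden, heq⟩ := hep
  -- integrals of powers of w
  have hI2pos : 0 < ∫ y, w1d y ^ 2 := integral_w1d_pow_pos 2 (by norm_num)
  have hI3pos : 0 < ∫ y, w1d y ^ 3 := integral_w1d_pow_pos 3 (by norm_num)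
  have hI4pos : 0 < ∫ y, w1d y ^ 4 := integral_w1d_pow_pos 4 (by norm_num)
  have hI6pos : 0 < ∫ y, w1d y ^ 6 := integral_w1d_pow_pos 6 (by norm_num)
  -- differentiability structure
  have h2 : ContDiff ℝ ((1:ℕ∞)+1) φ := by norm_num; exact hC2
  rw [contDiff_succ_iff_deriv] at h2
  obtain ⟨hd1, -, h1'⟩ := h2
  have h1 : ContDiff ℝ 1 (deriv φ) := by exact_mod_cast h1'
  rw [contDiff_one_iff_deriv] at h1
  obtain ⟨hd2, hch⟩ := h1
  have hdf : ∀ x, HasDerivAt φ (deriv φ x) x := fun x => (hd1 x).hasDerivAt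
  have hdg : ∀ x, HasDerivAt (deriv φ) (deriv (deriv φ) x) x := fun x => (hd2 x).hasDerivAt
  have hφcont : Continuous φ := hd1.continuous
  -- the nonlocal coefficient
  obtain ⟨K, hKdef⟩ : ∃ K : ℂ, K = (3 / (1 + (τ : ℂ) * lam)) *
          ((∫ y, (w1d y : ℂ) ^ 2 * φ y) / (∫ y, (w1d y : ℂ) ^ 3))
      + (2 * (τ : ℂ) * lam / (1 + (τ : ℂ) * lam)) *
          ((∫ y, (w1d y : ℂ) * φ y) / (∫ y, (w1d y : ℂ) ^ 2)) := ⟨_, rfl⟩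
  have hK : ∀ x, deriv (deriv φ) x
      = lam * φ x + φ x - 3 * (w1d x : ℂ) ^ 2 * φ x + K * (w1d x : ℂ) ^ 3 := by
    intro x
    rw [hKdef]
    linear_combination heq x
  -- measurability / membership facts
  have hφconj : MemLp (fun x => (starRingEnd ℂ) (φ x)) 2 volume := memLp_conj hφ2
  have contw : Continuous fun y : ℝ => ((w1d y : ℂ)) :=
    Complex.continuous_ofReal.comp w1d_continuous
  have m3 : MemLp (fun x => 3 * (w1d x : ℂ) ^ 2 * φ x) 2 volume := by
    apply MemLp.of_le_mul (c := 6) hφ2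
      ((continuous_const.mul (contw.pow 2)).aestronglyMeasurable.mul hφ2.1)
    filter_upwards with x
    show ‖3 * (w1d x : ℂ) ^ 2 * φ x‖ ≤ 6 * ‖φ x‖
    rw [norm_mul, norm_mul, norm_w1d_pow]
    have h6 : ‖(3:ℂ)‖ = 3 := by norm_num
    rw [h6]
    nlinarith [w1d_sq_le x, norm_nonneg (φ x), sq_nonneg (w1d x)]
  have mh : MemLp (deriv (deriv φ)) 2 volume := by
    have hsum := (((hφ2.const_mul lam).add hφ2).sub m3).add
      ((memLp_w1d_pow 3 (by norm_num)).const_mul K)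
    have hfun : deriv (deriv φ) = fun x =>
        lam * φ x + φ x - 3 * (w1d x : ℂ) ^ 2 * φ x + K * (w1d x : ℂ) ^ 3 := funext hK
    rw [hfun]
    exact hsum
  -- integration by parts
  have hibp := ibp_L2 hdf hdg hch hφ2 hg2 mh
  -- integrability of the products
  have iφφ : Integrable (fun x => φ x * (starRingEnd ℂ) (φ x)) volume :=
    integrable_mul_L2 hφ2 hφconj
  have iW2φφ : Integrable (fun x => (w1d x : ℂ) ^ 2 * (φ x * (starRingEnd ℂ) (φ x))) volume := by
    apply iφφ.bdd_mul (c := 2) (contw.pow 2).aestronglyMeasurable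
    exact Eventually.of_forall (fun x => by simp only [Pi.pow_apply]; rw [norm_w1d_pow]; exact w1d_sq_le x)
  have iW3φ : Integrable (fun x => (w1d x : ℂ) ^ 3 * (starRingEnd ℂ) (φ x)) volume :=
    integrable_mul_L2 (memLp_w1d_pow 3 (by norm_num)) hφconj
  -- expansion of the integral
  have hexp : (∫ x, deriv (deriv φ) x * (starRingEnd ℂ) (φ x))
      = lam * (∫ x, φ x * (starRingEnd ℂ) (φ x)) + (∫ x, φ x * (starRingEnd ℂ) (φ x))
        - 3 * (∫ x, (w1d x : ℂ) ^ 2 * (φ x * (starRingEnd ℂ) (φ x)))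
        + K * (∫ x, (w1d x : ℂ) ^ 3 * (starRingEnd ℂ) (φ x)) := by
    have hfun : (fun x => deriv (deriv φ) x * (starRingEnd ℂ) (φ x))
        = fun x => (lam * (φ x * (starRingEnd ℂ) (φ x)) + φ x * (starRingEnd ℂ) (φ x)
            - 3 * ((w1d x : ℂ) ^ 2 * (φ x * (starRingEnd ℂ) (φ x))))
          + K * ((w1d x : ℂ) ^ 3 * (starRingEnd ℂ) (φ x)) := by
      funext x; rw [hK x]; ring
    have ia : Integrable (fun x => lam * (φ x * (starRingEnd ℂ) (φ x))) volume :=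
      iφφ.const_mul lam
    have ic : Integrable (fun x => 3 * ((w1d x : ℂ) ^ 2 * (φ x * (starRingEnd ℂ) (φ x)))) volume :=
      iW2φφ.const_mul 3
    have idd : Integrable (fun x => K * ((w1d x : ℂ) ^ 3 * (starRingEnd ℂ) (φ x))) volume :=
      iW3φ.const_mul K
    have iab : Integrable (fun x => lam * (φ x * (starRingEnd ℂ) (φ x))
        + φ x * (starRingEnd ℂ) (φ x)) volume := ia.add iφφ
    have iabc : Integrable (fun x => lam * (φ x * (starRingEnd ℂ) (φ x))
        + φ x * (starRingEnd ℂ) (φ x)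
        - 3 * ((w1d x : ℂ) ^ 2 * (φ x * (starRingEnd ℂ) (φ x)))) volume := iab.sub ic
    rw [hfun, integral_add iabc idd, integral_sub iab ic, integral_add ia iφφ,
      integral_const_mul, integral_const_mul, integral_const_mul]
  -- identification of the real integrals
  have hNc : (∫ x, φ x * (starRingEnd ℂ) (φ x)) = 1 := by
    have hfun : (fun x => φ x * (starRingEnd ℂ) (φ x))
        = fun x => ((‖φ x‖ ^ 2 : ℝ) : ℂ) := by
      funext x; rw [Complex.mul_conj]; norm_cast
      rw [Complex.normSq_eq_norm_sq]
    rw [hfun, show (∫ x, ((‖φ x‖ ^ 2 : ℝ) : ℂ)) = ((∫ x, ‖φ x‖ ^ 2 : ℝ) : ℂ) from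
      integral_ofReal, hnorm, Complex.ofReal_one]
  have hMc : (∫ x, (w1d x : ℂ) ^ 2 * (φ x * (starRingEnd ℂ) (φ x)))
      = ((∫ x, w1d x ^ 2 * ‖φ x‖ ^ 2 : ℝ) : ℂ) := by
    have hfun : (fun x => (w1d x : ℂ) ^ 2 * (φ x * (starRingEnd ℂ) (φ x)))
        = fun x => ((w1d x ^ 2 * ‖φ x‖ ^ 2 : ℝ) : ℂ) := by
      funext x
      rw [Complex.mul_conj, Complex.normSq_eq_norm_sq]
      push_cast; ring
    rw [hfun]
    exact integral_ofReal
  have hGc : (∫ x, deriv φ x * (starRingEnd ℂ) (deriv φ x))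
      = ((∫ x, ‖deriv φ x‖ ^ 2 : ℝ) : ℂ) := by
    have hfun : (fun x => deriv φ x * (starRingEnd ℂ) (deriv φ x))
        = fun x => ((‖deriv φ x‖ ^ 2 : ℝ) : ℂ) := by
      funext x; rw [Complex.mul_conj]; norm_cast
      rw [Complex.normSq_eq_norm_sq]
    rw [hfun]
    exact integral_ofReal
  set M : ℝ := ∫ x, w1d x ^ 2 * ‖φ x‖ ^ 2 with hMdef
  set G : ℝ := ∫ x, ‖deriv φ x‖ ^ 2 with hGdef
  set Jc : ℂ := ∫ x, (w1d x : ℂ) ^ 3 * (starRingEnd ℂ) (φ x) with hJcdef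
  rw [hexp, hNc, hMc, hGc] at hibp
  -- bounds on M and G
  have hφsq : Integrable (fun x => ‖φ x‖ ^ 2) volume := by simpa using hφ2.norm.integrable_sq
  have iMr : Integrable (fun x => w1d x ^ 2 * ‖φ x‖ ^ 2) volume := by
    apply hφsq.bdd_mul (c := 2) (w1d_continuous.pow 2).aestronglyMeasurable
    exact Eventually.of_forall (fun x => by
      simp only [Pi.pow_apply]
      rw [Real.norm_eq_abs, abs_of_nonneg (pow_nonneg (w1d_pos x).le 2)]
      exact w1d_sq_le x)
  have hM0 : 0 ≤ M := by
    rw [hMdef]; exact integral_nonneg fun x => by positivity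
  have hM2 : M ≤ 2 := by
    rw [hMdef]
    calc (∫ x, w1d x ^ 2 * ‖φ x‖ ^ 2) ≤ ∫ x, 2 * ‖φ x‖ ^ 2 :=
          integral_mono iMr (hφsq.const_mul 2)
            (fun x => mul_le_mul_of_nonneg_right (w1d_sq_le x) (sq_nonneg _))
      _ = 2 := by rw [integral_const_mul, hnorm, mul_one]
  have hG0 : 0 ≤ G := by
    rw [hGdef]; exact integral_nonneg fun x => sq_nonneg _
  -- the complex identity for lam
  have hlam : lam = ((-1 - G + 3 * M : ℝ) : ℂ) - K * Jc := by
    push_cast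
    linear_combination hibp
  -- bound on |1 + τ lam| from below
  have habs1 : 1 ≤ ‖(1 + (τ : ℂ) * lam)‖ := by
    have hre1 : (1:ℝ) ≤ (1 + (τ : ℂ) * lam).re := by
      simp only [Complex.add_re, Complex.one_re, Complex.mul_re, Complex.ofReal_re,
        Complex.ofReal_im]
      nlinarith
    calc (1:ℝ) ≤ (1 + (τ : ℂ) * lam).re := hre1
      _ ≤ |(1 + (τ : ℂ) * lam).re| := le_abs_self _
      _ ≤ ‖(1 + (τ : ℂ) * lam)‖ := Complex.abs_re_le_norm _
  -- bound on |τ lam / (1 + τ lam)|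
  have hfrac : ‖((τ : ℂ) * lam / (1 + (τ : ℂ) * lam))‖ ≤ 2 := by
    have hrw : (τ : ℂ) * lam / (1 + (τ : ℂ) * lam) = 1 - 1 / (1 + (τ : ℂ) * lam) := by
      field_simp
      ring
    rw [hrw]
    have h1' : ‖(1 / (1 + (τ : ℂ) * lam))‖ ≤ 1 := by
      rw [norm_div, norm_one]
      rw [div_le_one (by linarith : (0:ℝ) < ‖(1 + (τ : ℂ) * lam)‖)]
      exact habs1
    calc ‖(1 - 1 / (1 + (τ : ℂ) * lam))‖
        ≤ ‖(1:ℂ)‖ + ‖(1 / (1 + (τ : ℂ) * lam))‖ := by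
          simpa using
            norm_sub_le (1 : ℂ) (1 / (1 + (τ : ℂ) * lam))
      _ ≤ 1 + 1 := by rw [norm_one]; linarith
      _ = 2 := by norm_num
  -- bounds on the nonlocal integrals
  have habsJ2 : ‖(∫ y, (w1d y : ℂ) ^ 2 * φ y)‖ ≤ ((∫ y, w1d y ^ 4) + 1) / 2 := by
    have := abs_integral_w_mul_le 2 (by norm_num) hφ2
    rw [hnorm] at this
    convert this using 4
  have habsJ1 : ‖(∫ y, (w1d y : ℂ) * φ y)‖ ≤ ((∫ y, w1d y ^ 2) + 1) / 2 := by
    have h := abs_integral_w_mul_le 1 (le_refl 1) hφ2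
    rw [hnorm] at h
    simp only [pow_one] at h
    convert h using 4
  have habsJc : ‖Jc‖ ≤ ((∫ y, w1d y ^ 6) + 1) / 2 := by
    have h := abs_integral_w_mul_le 3 (by norm_num) hφconj
    have hcn : (∫ y, ‖(starRingEnd ℂ) (φ y)‖ ^ 2) = 1 := by
      rw [← hnorm]
      congr 1; funext y; rw [RCLike.norm_conj]
    rw [hcn] at h
    rw [hJcdef]
    convert h using 4
  -- identification of the denominators
  have hS3 : (∫ y, (w1d y : ℂ) ^ 3) = ((∫ y, w1d y ^ 3 : ℝ) : ℂ) := by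
    rw [show (fun y => (w1d y : ℂ) ^ 3) = fun y => ((w1d y ^ 3 : ℝ) : ℂ) from
      funext fun y => by push_cast; ring]
    exact integral_ofReal
  have hS2 : (∫ y, (w1d y : ℂ) ^ 2) = ((∫ y, w1d y ^ 2 : ℝ) : ℂ) := by
    rw [show (fun y => (w1d y : ℂ) ^ 2) = fun y => ((w1d y ^ 2 : ℝ) : ℂ) from
      funext fun y => by push_cast; ring]
    exact integral_ofReal
  -- bound on |K|
  have habs2 : ‖(2 * (τ : ℂ) * lam / (1 + (τ : ℂ) * lam))‖ ≤ 4 := by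
    have hrw : 2 * (τ : ℂ) * lam / (1 + (τ : ℂ) * lam)
        = 2 * ((τ : ℂ) * lam / (1 + (τ : ℂ) * lam)) := by ring
    rw [hrw, norm_mul]
    have hb2 : ‖(2:ℂ)‖ = 2 := by norm_num
    rw [hb2]
    linarith
  have hKbound : ‖K‖ ≤ 3 * (((∫ y, w1d y ^ 4) + 1) / 2) / (∫ y, w1d y ^ 3)
      + 4 * (((∫ y, w1d y ^ 2) + 1) / 2) / (∫ y, w1d y ^ 2) := by
    rw [hKdef]
    refine (norm_add_le _ _).trans ?_
    have ht1 : ‖((3 / (1 + (τ : ℂ) * lam)) *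
          ((∫ y, (w1d y : ℂ) ^ 2 * φ y) / (∫ y, (w1d y : ℂ) ^ 3)))‖
        ≤ 3 * ((((∫ y, w1d y ^ 4) + 1) / 2) / (∫ y, w1d y ^ 3)) := by
      rw [norm_mul, norm_div, norm_div, hS3, Complex.norm_real, Real.norm_eq_abs, abs_of_pos hI3pos]
      have hb3 : ‖(3:ℂ)‖ = 3 := by norm_num
      rw [hb3]
      have h1 : 3 / ‖(1 + (τ : ℂ) * lam)‖ ≤ 3 :=
        div_le_self (by norm_num) habs1
      have h2 : ‖(∫ y, (w1d y : ℂ) ^ 2 * φ y)‖ / (∫ y, w1d y ^ 3)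
          ≤ (((∫ y, w1d y ^ 4) + 1) / 2) / (∫ y, w1d y ^ 3) := by gcongr
      apply mul_le_mul h1 h2 (by positivity) (by norm_num)
    have ht2 : ‖((2 * (τ : ℂ) * lam / (1 + (τ : ℂ) * lam)) *
          ((∫ y, (w1d y : ℂ) * φ y) / (∫ y, (w1d y : ℂ) ^ 2)))‖
        ≤ 4 * ((((∫ y, w1d y ^ 2) + 1) / 2) / (∫ y, w1d y ^ 2)) := by
      have hdiv : ‖((∫ y, (w1d y : ℂ) * φ y) / (∫ y, (w1d y : ℂ) ^ 2))‖
          = ‖(∫ y, (w1d y : ℂ) * φ y)‖ / (∫ y, w1d y ^ 2) := by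
        rw [norm_div, hS2, Complex.norm_real, Real.norm_eq_abs, abs_of_pos hI2pos]
      rw [norm_mul, hdiv]
      have h2 : ‖(∫ y, (w1d y : ℂ) * φ y)‖ / (∫ y, w1d y ^ 2)
          ≤ (((∫ y, w1d y ^ 2) + 1) / 2) / (∫ y, w1d y ^ 2) := by gcongr
      apply mul_le_mul habs2 h2 (by positivity) (by norm_num)
    calc ‖((3 / (1 + (τ : ℂ) * lam)) *
          ((∫ y, (w1d y : ℂ) ^ 2 * φ y) / (∫ y, (w1d y : ℂ) ^ 3)))‖
        + ‖((2 * (τ : ℂ) * lam / (1 + (τ : ℂ) * lam)) *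
          ((∫ y, (w1d y : ℂ) * φ y) / (∫ y, (w1d y : ℂ) ^ 2)))‖
        ≤ 3 * ((((∫ y, w1d y ^ 4) + 1) / 2) / (∫ y, w1d y ^ 3))
          + 4 * ((((∫ y, w1d y ^ 2) + 1) / 2) / (∫ y, w1d y ^ 2)) := add_le_add ht1 ht2
      _ = 3 * (((∫ y, w1d y ^ 4) + 1) / 2) / (∫ y, w1d y ^ 3)
          + 4 * (((∫ y, w1d y ^ 2) + 1) / 2) / (∫ y, w1d y ^ 2) := by ring
  -- final assembly
  have hk0 : 0 ≤ 3 * (((∫ y, w1d y ^ 4) + 1) / 2) / (∫ y, w1d y ^ 3)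
      + 4 * (((∫ y, w1d y ^ 2) + 1) / 2) / (∫ y, w1d y ^ 2) :=
    add_nonneg (div_nonneg (by nlinarith) hI3pos.le) (div_nonneg (by nlinarith) hI2pos.le)
  have hEbound : ‖(K * Jc)‖
      ≤ (3 * (((∫ y, w1d y ^ 4) + 1) / 2) / (∫ y, w1d y ^ 3)
        + 4 * (((∫ y, w1d y ^ 2) + 1) / 2) / (∫ y, w1d y ^ 2))
        * (((∫ y, w1d y ^ 6) + 1) / 2) := by
    rw [norm_mul]
    exact mul_le_mul hKbound habsJc (norm_nonneg _) hk0
  have hreid : lam.re = (-1 - G + 3 * M) - (K * Jc).re := by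
    rw [hlam]
    simp [Complex.sub_re, Complex.ofReal_re]
  have hrelow : -(‖(K * Jc)‖) ≤ (K * Jc).re :=
    (abs_le.1 (Complex.abs_re_le_norm _)).1
  have hE0 : 0 ≤ (3 * (((∫ y, w1d y ^ 4) + 1) / 2) / (∫ y, w1d y ^ 3)
        + 4 * (((∫ y, w1d y ^ 2) + 1) / 2) / (∫ y, w1d y ^ 2))
        * (((∫ y, w1d y ^ 6) + 1) / 2) := by
    apply mul_nonneg hk0; nlinarith
  rw [hlam]
  calc ‖(((-1 - G + 3 * M : ℝ) : ℂ) - K * Jc)‖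
      ≤ ‖((-1 - G + 3 * M : ℝ) : ℂ)‖ + ‖(K * Jc)‖ := by
        simpa using
          norm_sub_le (((-1 - G + 3 * M : ℝ) : ℂ)) (K * Jc)
    _ ≤ (6 + (3 * (((∫ y, w1d y ^ 4) + 1) / 2) / (∫ y, w1d y ^ 3)
        + 4 * (((∫ y, w1d y ^ 2) + 1) / 2) / (∫ y, w1d y ^ 2))
        * (((∫ y, w1d y ^ 6) + 1) / 2))
        + (3 * (((∫ y, w1d y ^ 4) + 1) / 2) / (∫ y, w1d y ^ 3)
        + 4 * (((∫ y, w1d y ^ 2) + 1) / 2) / (∫ y, w1d y ^ 2))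
        * (((∫ y, w1d y ^ 6) + 1) / 2) := by
        apply add_le_add _ hEbound
        rw [Complex.norm_real, Real.norm_eq_abs]
        apply abs_le.2
        constructor
        · linarith [hreid, hrelow, hEbound, hre]
        · linarith
    _ = 6 + (3 * (((∫ y, w1d y ^ 4) + 1) / 2) / (∫ y, w1d y ^ 3)
        + 4 * (((∫ y, w1d y ^ 2) + 1) / 2) / (∫ y, w1d y ^ 2))
        * ((∫ y, w1d y ^ 6) + 1) := by ring

/-- Any eigenvalue of the one-dimensional NLEP with nonnegative real part is bounded,
uniformly in `τ̃ > 0`. -/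
theorem nlep1_eigenvalue_bound :
    ∃ C > (0:ℝ), ∀ τ : ℝ, 0 < τ → ∀ (lam : ℂ) (φ : ℝ → ℂ),
      IsNLEP1Eigenpair τ lam φ → 0 ≤ lam.re → ‖lam‖ ≤ C := by
  have hI2pos : 0 < ∫ y, w1d y ^ 2 := integral_w1d_pow_pos 2 (by norm_num)
  have hI3pos : 0 < ∫ y, w1d y ^ 3 := integral_w1d_pow_pos 3 (by norm_num)
  have hI4pos : 0 < ∫ y, w1d y ^ 4 := integral_w1d_pow_pos 4 (by norm_num)
  have hI6pos : 0 < ∫ y, w1d y ^ 6 := integral_w1d_pow_pos 6 (by norm_num)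
  refine ⟨6 + (3 * (((∫ y, w1d y ^ 4) + 1) / 2) / (∫ y, w1d y ^ 3)
      + 4 * (((∫ y, w1d y ^ 2) + 1) / 2) / (∫ y, w1d y ^ 2)) * ((∫ y, w1d y ^ 6) + 1),
    ?_, ?_⟩
  · have hk0 : 0 ≤ 3 * (((∫ y, w1d y ^ 4) + 1) / 2) / (∫ y, w1d y ^ 3)
        + 4 * (((∫ y, w1d y ^ 2) + 1) / 2) / (∫ y, w1d y ^ 2) :=
      add_nonneg (div_nonneg (by nlinarith) hI3pos.le) (div_nonneg (by nlinarith) hI2pos.le)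
    nlinarith [mul_nonneg hk0 (by nlinarith : (0:ℝ) ≤ (∫ y, w1d y ^ 6) + 1)]
  · intro τ hτ lam φ hep hre
    obtain ⟨hC2, ⟨x0, hx0⟩, hφ2, hφ'2, hden, heqq⟩ := hep
    -- differentiability
    have h2 : ContDiff ℝ ((1:ℕ∞)+1) φ := by norm_num; exact hC2
    rw [contDiff_succ_iff_deriv] at h2
    obtain ⟨hd1, -, h1'⟩ := h2
    have h1 : ContDiff ℝ 1 (deriv φ) := by exact_mod_cast h1'
    rw [contDiff_one_iff_deriv] at h1
    obtain ⟨hd2, hch⟩ := h1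
    -- positivity of the L² norm
    have hint : Integrable (fun x => ‖φ x‖ ^ 2) volume := by simpa using hφ2.norm.integrable_sq
    have hucont : Continuous fun x => ‖φ x‖ ^ 2 := (hC2.continuous.norm).pow 2
    have hN0 : 0 < ∫ x, ‖φ x‖ ^ 2 := by
      rw [integral_pos_iff_support_of_nonneg (fun x => sq_nonneg _) hint]
      apply hucont.isOpen_support.measure_pos volume
      exact ⟨x0, by simp [Function.mem_support, hx0]⟩
    set N : ℝ := ∫ x, ‖φ x‖ ^ 2 with hNdef
    set c : ℝ := (Real.sqrt N)⁻¹ with hcdef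
    have hc0 : 0 < c := by
      rw [hcdef]; exact inv_pos.2 (Real.sqrt_pos.2 hN0)
    -- transformed derivatives
    have hdψ : deriv (fun x => (c:ℂ) * φ x) = fun x => (c:ℂ) * deriv φ x :=
      funext fun x => deriv_const_mul _ (hd1 x)
    have hddψ : deriv (deriv (fun x => (c:ℂ) * φ x)) = fun x => (c:ℂ) * deriv (deriv φ) x := by
      rw [hdψ]
      exact funext fun x => deriv_const_mul _ (hd2 x)
    -- transformed integrals
    have hw2ψ : (∫ y, (w1d y : ℂ) ^ 2 * ((c:ℂ) * φ y))
        = (c:ℂ) * ∫ y, (w1d y : ℂ) ^ 2 * φ y := by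
      rw [show (fun y => (w1d y : ℂ) ^ 2 * ((c:ℂ) * φ y))
        = fun y => (c:ℂ) * ((w1d y : ℂ) ^ 2 * φ y) from funext fun y => by ring,
        integral_const_mul]
    have hw1ψ : (∫ y, (w1d y : ℂ) * ((c:ℂ) * φ y))
        = (c:ℂ) * ∫ y, (w1d y : ℂ) * φ y := by
      rw [show (fun y => (w1d y : ℂ) * ((c:ℂ) * φ y))
        = fun y => (c:ℂ) * ((w1d y : ℂ) * φ y) from funext fun y => by ring,
        integral_const_mul]
    -- the normalized eigenpair
    have eigen : IsNLEP1Eigenpair τ lam (fun x => (c:ℂ) * φ x) := by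
      refine ⟨contDiff_const.mul hC2, ⟨x0, ?_⟩, hφ2.const_mul _, ?_, hden, ?_⟩
      · exact mul_ne_zero (by exact_mod_cast hc0.ne') hx0
      · rw [hdψ]; exact hφ'2.const_mul _
      · intro x
        have hdd := congrFun hddψ x
        rw [hdd, hw2ψ, hw1ψ]
        linear_combination (c:ℂ) * heqq x
    -- normalization
    have hnorm1 : (∫ x, ‖(c:ℂ) * φ x‖ ^ 2) = 1 := by
      have hfun : (fun x => ‖(c:ℂ) * φ x‖ ^ 2) = fun x => c ^ 2 * ‖φ x‖ ^ 2 := by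
        funext x
        rw [norm_mul, Complex.norm_real, Real.norm_eq_abs, abs_of_pos hc0, mul_pow]
      rw [hfun, integral_const_mul, ← hNdef, hcdef, inv_pow,
        Real.sq_sqrt hN0.le, inv_mul_cancel₀ hN0.ne']
    exact nlep_core τ hτ lam (fun x => (c:ℂ) * φ x) eigen hre hnorm1
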